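/- For all M, M' ∈ Sp(2n,ℤ), one has φ_{MM'} ≡ φ_M + M φ_{M'} (mod (2ℤ)^{2n}), i.e., every coordinate of φ_{MM'} − φ_M − Mφ_{M'} is an even integer. -/

import Mathlib

open Matrix BigOperators

/-- The standard symplectic bilinear form `σ((q,p),(q',p')) = ⟨p,q'⟩ − ⟨p',q⟩` on `ℤ^{2n}`,
where a vector `x : Fin n ⊕ Fin n → ℤ` has `q`-coordinates `x (Sum.inl i)` and
`p`-coordinates `x (Sum.inr i)`. -/
def sigmaZ (n : ℕ) (x y : Fin n ⊕ Fin n → ℤ) : ℤ :=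
  (∑ i : Fin n, x (Sum.inr i) * y (Sum.inl i)) - ∑ i : Fin n, y (Sum.inr i) * x (Sum.inl i)

/-- `Q((q,p)) = ⟨q,p⟩`. -/
def QZ (n : ℕ) (x : Fin n ⊕ Fin n → ℤ) : ℤ :=
  ∑ i : Fin n, x (Sum.inl i) * x (Sum.inr i)

/-- An integer `2n × 2n` matrix is symplectic if it preserves the standard symplectic
bilinear form (equivalently, its real extension preserves `σ` on all of `ℝ^{2n}`). -/
def IsSymplecticZ (n : ℕ) (M : Matrix (Fin n ⊕ Fin n) (Fin n ⊕ Fin n) ℤ) : Prop :=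
  ∀ x y : Fin n ⊕ Fin n → ℤ, sigmaZ n (M.mulVec x) (M.mulVec y) = sigmaZ n x y

/-- `φ_{MM'} ≡ φ_M + M φ_{M'} (mod (2ℤ)^{2n})`, i.e. every coordinate of
`φ_{MM'} − φ_M − M φ_{M'}` is an even integer.  Here `φM`, `φM'` and `φMM'` are the unique
elements of `{0,1}^{2n}` characterizing `M`, `M'` and `MM'` via
`Q(·⁻¹w) − Q(w) ≡ σ(φ, w) (mod 2)`, and `Minv`, `M'inv` are the inverses of `M`, `M'`
(so that `(MM')⁻¹ = M'⁻¹M⁻¹`). -/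
theorem phi_mul (n : ℕ) (M M' Minv M'inv : Matrix (Fin n ⊕ Fin n) (Fin n ⊕ Fin n) ℤ)
    (hM : IsSymplecticZ n M) (hM' : IsSymplecticZ n M')
    (hMinv₁ : M * Minv = 1) (hMinv₂ : Minv * M = 1)
    (hM'inv₁ : M' * M'inv = 1) (hM'inv₂ : M'inv * M' = 1)
    (φM φM' φMM' : Fin n ⊕ Fin n → ℤ)
    (hφM01 : ∀ i, φM i = 0 ∨ φM i = 1)
    (hφM : ∀ w : Fin n ⊕ Fin n → ℤ,
      (2 : ℤ) ∣ (QZ n (Minv.mulVec w) - QZ n w - sigmaZ n φM w))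
    (hφM'01 : ∀ i, φM' i = 0 ∨ φM' i = 1)
    (hφM' : ∀ w : Fin n ⊕ Fin n → ℤ,
      (2 : ℤ) ∣ (QZ n (M'inv.mulVec w) - QZ n w - sigmaZ n φM' w))
    (hφMM'01 : ∀ i, φMM' i = 0 ∨ φMM' i = 1)
    (hφMM' : ∀ w : Fin n ⊕ Fin n → ℤ,
      (2 : ℤ) ∣ (QZ n ((M'inv * Minv).mulVec w) - QZ n w - sigmaZ n φMM' w)) :
    ∀ i, (2 : ℤ) ∣ (φMM' i - φM i - M.mulVec φM' i) := by

  -- main claim: for all w, 2 ∣ σ(φMM' - φM - M φM', w)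
  have key : ∀ w : Fin n ⊕ Fin n → ℤ,
      (2 : ℤ) ∣ (sigmaZ n φMM' w - sigmaZ n φM w - sigmaZ n (M.mulVec φM') w) := by
    intro w
    have h1 := hφMM' w
    have h2 := hφM w
    have h3 := hφM' (Minv.mulVec w)
    have hcomp : (M'inv * Minv).mulVec w = M'inv.mulVec (Minv.mulVec w) := by
      rw [← Matrix.mulVec_mulVec]
    have hback : M.mulVec (Minv.mulVec w) = w := by
      rw [Matrix.mulVec_mulVec, hMinv₁, Matrix.one_mulVec]
    have hsig : sigmaZ n (M.mulVec φM') w = sigmaZ n φM' (Minv.mulVec w) := by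
      conv_lhs => rw [← hback]
      exact hM φM' (Minv.mulVec w)
    rw [hsig]
    have := dvd_sub (dvd_sub h1 h2) h3
    rw [hcomp] at this
    have h4 : (2 : ℤ) ∣ -_ := (dvd_neg).mpr this
    convert h4 using 1
    ring
  intro i
  rcases i with j | j
  · have := key (Pi.single (Sum.inr j) 1)
    have hs : sigmaZ n φMM' (Pi.single (Sum.inr j) 1)
        - sigmaZ n φM (Pi.single (Sum.inr j) 1)
        - sigmaZ n (M.mulVec φM') (Pi.single (Sum.inr j) 1)
        = -(φMM' (Sum.inl j) - φM (Sum.inl j) - M.mulVec φM' (Sum.inl j)) := by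
      simp [sigmaZ, Pi.single_apply, Finset.sum_ite_eq', mul_comm]
      ring
    rw [hs] at this
    exact (dvd_neg).mp this
  · have := key (Pi.single (Sum.inl j) 1)
    have hs : sigmaZ n φMM' (Pi.single (Sum.inl j) 1)
        - sigmaZ n φM (Pi.single (Sum.inl j) 1)
        - sigmaZ n (M.mulVec φM') (Pi.single (Sum.inl j) 1)
        = (φMM' (Sum.inr j) - φM (Sum.inr j) - M.mulVec φM' (Sum.inr j)) := by
      simp [sigmaZ, Pi.single_apply, Finset.sum_ite_eq', mul_comm]
    rw [hs] at this
    exact this
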